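/- Let M be a Z_p-module and f, f' nilpotent endomorphisms of M of index < p such that exp(f) = exp(f'), where exp is the truncated exponential Σ_{k=0}^{p-1} (·)^k/k!. Then f = f'. -/

import Mathlib

/-- Truncated exponential `∑_{k<p} f^k/k!` of an endomorphism of a `ℤ_[p]`-module. -/
noncomputable def texp (p : ℕ) [Fact p.Prime] {M : Type*} [AddCommGroup M] [Module ℤ_[p] M]
    (f : Module.End ℤ_[p] M) : Module.End ℤ_[p] M :=
  ∑ k ∈ Finset.range p, Ring.inverse ((k.factorial : ℤ_[p])) • f ^ k

/-- Truncated logarithm `∑_{1≤k≤p-1} (-1)^{k+1}(g-1)^k/k`. -/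
noncomputable def tlog (p : ℕ) [Fact p.Prime] {M : Type*} [AddCommGroup M] [Module ℤ_[p] M]
    (g : Module.End ℤ_[p] M) : Module.End ℤ_[p] M :=
  ∑ k ∈ Finset.Icc 1 (p - 1), ((-1 : ℤ_[p]) ^ (k + 1) * Ring.inverse ((k : ℤ_[p]))) • (g - 1) ^ k

namespace Stmt12Aux

open Polynomial Finset

/-! ### The truncated exp and log as polynomials over `ℚ_[p]` -/

noncomputable def EK (p : ℕ) [Fact p.Prime] : ℚ_[p][X] :=
  ∑ k ∈ range p, C ((k.factorial : ℚ_[p]))⁻¹ * X ^ k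

noncomputable def LK (p : ℕ) [Fact p.Prime] : ℚ_[p][X] :=
  ∑ k ∈ Finset.Icc 1 (p - 1), C ((-1 : ℚ_[p]) ^ (k + 1) * (k : ℚ_[p])⁻¹) * (X - 1) ^ k

variable {p : ℕ} [Fact p.Prime]

lemma derivative_EK :
    derivative (EK p) = EK p - C (((p - 1).factorial : ℚ_[p]))⁻¹ * X ^ (p - 1) := by
  have hp1 : 1 ≤ p := (Fact.out : p.Prime).pos
  obtain ⟨n, rfl⟩ : ∃ n, p = n + 1 := ⟨p - 1, by omega⟩
  simp only [Nat.add_sub_cancel, EK]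
  rw [map_sum, Finset.sum_range_succ']
  have h0 : derivative (C (((0:ℕ).factorial : ℚ_[n+1]))⁻¹ * X ^ 0) = 0 := by simp
  rw [h0, add_zero, Finset.sum_range_succ, add_sub_cancel_right]
  apply Finset.sum_congr rfl
  intro i _
  rw [derivative_C_mul, derivative_X_pow, ← mul_assoc, ← C_mul, Nat.add_sub_cancel]
  congr 1
  have h1 : ((i+1 : ℕ) : ℚ_[n+1]) ≠ 0 := Nat.cast_ne_zero.2 (Nat.succ_ne_zero i)
  have h2 : ((i.factorial : ℚ_[n+1])) ≠ 0 := Nat.cast_ne_zero.2 i.factorial_ne_zero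
  rw [Nat.factorial_succ]
  push_cast
  field_simp

lemma derivative_LK_mul_X :
    derivative (LK p) * X = 1 - (1 - X) ^ (p - 1) := by
  have hp1 : 1 ≤ p := (Fact.out : p.Prime).pos
  have hL : derivative (LK p) = ∑ i ∈ range (p - 1), (1 - X) ^ i := by
    rw [LK, map_sum]
    rw [show Finset.Icc 1 (p-1) = Finset.Ico 1 p by
      rw [← Finset.Ico_add_one_right_eq_Icc]; congr 1; omega]
    rw [Finset.sum_Ico_eq_sum_range]
    apply Finset.sum_congr rfl
    intro i _
    have hX1 : (X - 1 : ℚ_[p][X]) = X - C 1 := by rw [C_1]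
    rw [derivative_C_mul, hX1, derivative_X_sub_C_pow, ← mul_assoc, ← C_mul]
    have h1 : ((1 + i : ℕ) : ℚ_[p]) ≠ 0 := Nat.cast_ne_zero.2 (by omega)
    have hc : (-1 : ℚ_[p]) ^ (1 + i + 1) * ((1 + i : ℕ) : ℚ_[p])⁻¹ * ((1 + i : ℕ) : ℚ_[p])
        = (-1 : ℚ_[p]) ^ i := by
      rw [mul_assoc, inv_mul_cancel₀ h1, mul_one, pow_add, pow_add]
      ring
    rw [hc, Nat.add_sub_cancel_left]
    rw [show (1 - X : ℚ_[p][X]) = (C (-1)) * (X - C 1) by simp]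
    rw [mul_pow, ← C_pow]
  rw [hL]
  have hg := geom_sum_mul (1 - X : ℚ_[p][X]) (p - 1)
  linear_combination -hg

lemma EK_eval_zero : (EK p).eval 0 = 1 := by
  rw [EK, eval_finset_sum]
  rw [Finset.sum_eq_single 0]
  · simp
  · intro k _ hk
    simp [zero_pow hk]
  · intro h
    exact absurd (Finset.mem_range.2 (Fact.out : p.Prime).pos) h

lemma X_dvd_one_sub_EK : (X : ℚ_[p][X]) ∣ (1 - EK p) := by
  rw [X_dvd_iff, coeff_zero_eq_eval_zero]
  simp [EK_eval_zero]

lemma not_X_dvd_EK : ¬ (X : ℚ_[p][X]) ∣ EK p := by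
  rw [X_dvd_iff, coeff_zero_eq_eval_zero, EK_eval_zero]
  exact one_ne_zero

lemma LK_eval_one : (LK p).eval 1 = 0 := by
  rw [LK, eval_finset_sum]
  apply Finset.sum_eq_zero
  intro k hk
  have hk1 : k ≠ 0 := by have := (Finset.mem_Icc.1 hk).1; omega
  simp [zero_pow hk1]

/-- The key identity `log (exp X) ≡ X mod X^(p-1)` over `ℚ_[p]`. -/
lemma core : (X : ℚ_[p][X]) ^ (p - 1) ∣ (LK p).comp (EK p) - X := by
  set n := p - 1 with hn
  set F := (LK p).comp (EK p) with hF
  have hd : (X : ℚ_[p][X]) ^ n ∣ derivative F - 1 := by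
    have hcomp : derivative F = derivative (EK p) * (derivative (LK p)).comp (EK p) :=
      derivative_comp _ _
    have hgeom : (derivative (LK p)).comp (EK p) * EK p = 1 - (1 - EK p) ^ n := by
      have := congrArg (fun q : ℚ_[p][X] => q.comp (EK p)) (derivative_LK_mul_X (p := p))
      simpa [mul_comp, sub_comp, one_comp, pow_comp] using this
    have h1 : (derivative F - 1) * EK p =
        derivative (EK p) * (1 - (1 - EK p) ^ n) - EK p := by
      rw [hcomp]
      linear_combination derivative (EK p) * hgeom
    have h5 : derivative (EK p) * (1 - (1 - EK p) ^ n) - EK p =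
        -(C ((n.factorial : ℚ_[p]))⁻¹ * X ^ n) - derivative (EK p) * (1 - EK p) ^ n := by
      have hde := derivative_EK (p := p)
      rw [← hn] at hde
      linear_combination hde
    have hdvd1 : (X : ℚ_[p][X]) ^ n ∣ (derivative F - 1) * EK p := by
      rw [h1, h5]
      apply dvd_sub
      · exact dvd_neg.2 ⟨C ((n.factorial : ℚ_[p]))⁻¹, mul_comm _ _⟩
      · exact Dvd.dvd.mul_left (pow_dvd_pow_of_dvd X_dvd_one_sub_EK n) _
    exact (prime_X (R := ℚ_[p])).pow_dvd_of_dvd_mul_right n not_X_dvd_EK hdvd1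
  rw [X_pow_dvd_iff]
  intro m hm
  rcases Nat.eq_zero_or_pos m with hm0 | hm0
  · subst hm0
    rw [coeff_sub, coeff_zero_eq_eval_zero, coeff_zero_eq_eval_zero]
    simp [hF, eval_comp, EK_eval_zero, LK_eval_one]
  · have h2 : (derivative (F - X)).coeff (m - 1) = 0 := by
      rw [X_pow_dvd_iff] at hd
      have := hd (m - 1) (by omega)
      simpa [derivative_sub] using this
    rw [coeff_derivative] at h2
    have hne : ((m - 1 : ℕ) + 1 : ℚ_[p]) ≠ 0 := Nat.cast_add_one_ne_zero (m-1)
    have h3 : (F - X).coeff (m - 1 + 1) = 0 := by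
      rcases mul_eq_zero.1 h2 with h | h
      · exact h
      · exact absurd h hne
    simpa [Nat.sub_add_cancel hm0] using h3

/-! ### The integral versions over `ℤ_[p]` -/

noncomputable def EZ (p : ℕ) [Fact p.Prime] : (PadicInt p)[X] :=
  ∑ k ∈ range p, C (Ring.inverse ((k.factorial : ℤ_[p]))) * X ^ k

noncomputable def LZ (p : ℕ) [Fact p.Prime] : (PadicInt p)[X] :=
  ∑ k ∈ Finset.Icc 1 (p - 1), C ((-1 : ℤ_[p]) ^ (k + 1) * Ring.inverse ((k : ℤ_[p]))) * (X - 1) ^ k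

lemma isUnit_nat_cast {n : ℕ} (h : ¬ p ∣ n) : IsUnit (n : ℤ_[p]) := by
  rw [PadicInt.isUnit_iff]
  have h1 : ¬ ‖((n : ℤ) : ℤ_[p])‖ < 1 := by
    rw [PadicInt.norm_int_lt_one_iff_dvd]
    exact_mod_cast h
  push_cast at h1
  exact le_antisymm (PadicInt.norm_le_one _) (not_lt.1 h1)

lemma coe_ring_inverse {a : ℤ_[p]} (h : IsUnit a) :
    ((Ring.inverse a : ℤ_[p]) : ℚ_[p]) = ((a : ℚ_[p]))⁻¹ := by
  have h1 := Ring.mul_inverse_cancel a h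
  have h2 : ((a : ℚ_[p])) * ((Ring.inverse a : ℤ_[p]) : ℚ_[p]) = 1 := by
    exact_mod_cast congrArg (fun x : ℤ_[p] => (x : ℚ_[p])) h1
  exact eq_inv_of_mul_eq_one_left (by rw [mul_comm]; exact h2)

lemma map_EZ : (EZ p).map (PadicInt.Coe.ringHom) = EK p := by
  rw [EZ, EK, Polynomial.map_sum]
  apply Finset.sum_congr rfl
  intro k hk
  rw [Polynomial.map_mul, Polynomial.map_pow, map_C, map_X]
  congr 1
  have hu : IsUnit ((k.factorial : ℤ_[p])) := by
    apply isUnit_nat_cast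
    rw [(Fact.out : p.Prime).dvd_factorial]
    have := Finset.mem_range.1 hk
    omega
  have := coe_ring_inverse hu
  rw [show (PadicInt.Coe.ringHom (Ring.inverse ((k.factorial : ℤ_[p])))) =
      ((Ring.inverse ((k.factorial : ℤ_[p])) : ℤ_[p]) : ℚ_[p]) from rfl, this]
  norm_cast

lemma map_LZ : (LZ p).map (PadicInt.Coe.ringHom) = LK p := by
  rw [LZ, LK, Polynomial.map_sum]
  apply Finset.sum_congr rfl
  intro k hk
  rw [Polynomial.map_mul, Polynomial.map_pow, map_C, Polynomial.map_sub, map_X,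
    Polynomial.map_one]
  congr 1
  have hu : IsUnit ((k : ℤ_[p])) := by
    apply isUnit_nat_cast
    intro hd
    obtain ⟨h1, h2⟩ := Finset.mem_Icc.1 hk
    have := Nat.le_of_dvd (by omega) hd
    have := (Fact.out : p.Prime).two_le
    omega
  have := coe_ring_inverse hu
  rw [show (PadicInt.Coe.ringHom ((-1 : ℤ_[p]) ^ (k + 1) * Ring.inverse ((k : ℤ_[p])))) =
      (((-1 : ℤ_[p]) ^ (k + 1) * Ring.inverse ((k : ℤ_[p])) : ℤ_[p]) : ℚ_[p]) from rfl]
  push_cast [this]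
  ring

lemma coreZ : (X : (PadicInt p)[X]) ^ (p - 1) ∣ (LZ p).comp (EZ p) - X := by
  rw [X_pow_dvd_iff]
  intro m hm
  have hc := core (p := p)
  rw [X_pow_dvd_iff] at hc
  have h0 := hc m hm
  rw [← map_EZ, ← map_LZ, ← Polynomial.map_comp] at h0
  have h1 : ((((LZ p).comp (EZ p) - X).map PadicInt.Coe.ringHom)).coeff m = 0 := by
    rw [Polynomial.map_sub, Polynomial.map_X]
    exact h0
  rw [Polynomial.coeff_map] at h1
  exact PadicInt.coe_eq_zero.1 (h1 : ((((LZ p).comp (EZ p) - X).coeff m : ℤ_[p]) : ℚ_[p]) = 0)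

/-! ### Back to endomorphisms -/

variable {M : Type*} [AddCommGroup M] [Module ℤ_[p] M]

lemma texp_eq_aeval (f : Module.End ℤ_[p] M) : texp p f = Polynomial.aeval f (EZ p) := by
  rw [texp, EZ, map_sum]
  apply Finset.sum_congr rfl
  intro k _
  rw [map_mul, aeval_C, map_pow, aeval_X, Algebra.smul_def]

lemma tlog_eq_aeval (g : Module.End ℤ_[p] M) : tlog p g = Polynomial.aeval g (LZ p) := by
  rw [tlog, LZ, map_sum]
  apply Finset.sum_congr rfl
  intro k _
  rw [map_mul, aeval_C, map_pow, map_sub, aeval_X, map_one, Algebra.smul_def]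

lemma tlog_texp (f : Module.End ℤ_[p] M) (hf : f ^ (p - 1) = 0) :
    tlog p (texp p f) = f := by
  obtain ⟨Q, hQ⟩ := coreZ (p := p)
  have hcomp : (LZ p).comp (EZ p) = X + X ^ (p - 1) * Q := by
    rw [← hQ]; ring
  rw [texp_eq_aeval, tlog_eq_aeval, ← aeval_comp, hcomp, map_add, map_mul, map_pow,
    aeval_X, hf, zero_mul, add_zero]

end Stmt12Aux

/-- Truncated `exp` is injective on nilpotent endomorphisms of index `< p`. -/
theorem stmt12 {p : ℕ} [Fact p.Prime] {M : Type*} [AddCommGroup M] [Module ℤ_[p] M]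
    (f f' : Module.End ℤ_[p] M) (hf : f ^ (p - 1) = 0) (hf' : f' ^ (p - 1) = 0)
    (h : texp p f = texp p f') : f = f' := by
  rw [← Stmt12Aux.tlog_texp f hf, ← Stmt12Aux.tlog_texp f' hf', h]
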